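/- arXiv:1906.00301 — 2 statements merged into one kernel-verified Lean document; each statement's English description precedes it below -/
import Mathlib

section
/- Let $(A,\mathfrak m_A) \to (B,\mathfrak m_B)$ be a local homomorphism of Noetherian local rings with residue field $F$ of $A$, let $M$ be a nonzero finitely generated $A$-module, and let $N$ be a nonzero finitely generated $B$-module flat over $A$. Then $N \otimes_A M$ has depth zero as a $B$-module if and only if $N \otimes_A F$ has depth zero as a $B$-module and $M$ has depth zero as an $A$-module. -/
open TensorProduct IsLocalRing

set_option linter.unusedSectionVars false

/-- The depth of a module over a Noetherian local ring: the supremum of the lengths of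
regular sequences on `M` contained in the maximal ideal. -/
noncomputable def moduleDepth (A : Type*) [CommRing A] [IsLocalRing A]
    (M : Type*) [AddCommGroup M] [Module A M] : WithTop ℕ :=
  sSup {n : WithTop ℕ | ∃ rs : List A, (∀ r ∈ rs, r ∈ maximalIdeal A) ∧
    RingTheory.Sequence.IsRegular M rs ∧ (rs.length : WithTop ℕ) = n}

section Ass
variable {R : Type*} [CommRing R] [IsNoetherianRing R] {Q : Type*} [AddCommGroup Q] [Module R Q]

lemma my_mem_colon {x : Q} {r : R} : r ∈ (⊥ : Submodule R Q).colon {x} ↔ r • x = 0 := by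
  rw [Submodule.mem_colon_singleton, Submodule.mem_bot]

lemma my_colon_zero : (⊥ : Submodule R Q).colon {(0 : Q)} = ⊤ := by
  ext r; simp [my_mem_colon]

lemma my_mk_smul {p : Ideal R} (r a : R) :
    r • (Ideal.Quotient.mk p a) = Ideal.Quotient.mk p (r * a) := by
  rw [Algebra.smul_def, Ideal.Quotient.algebraMap_eq, ← map_mul]

lemma my_ass_quotient_prime {p : Ideal R} (hp : p.IsPrime) :
    associatedPrimes R (R ⧸ p) ⊆ {p} := by
  rintro q hq'
  obtain ⟨hq, x, hx⟩ := isAssociatedPrime_iff.mp (AssociatedPrimes.mem_iff.mp hq')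
  obtain ⟨a, rfl⟩ := Ideal.Quotient.mk_surjective x
  by_cases ha : a ∈ p
  · exfalso
    apply hq.ne_top
    rw [hx, (Ideal.Quotient.eq_zero_iff_mem).mpr ha]
    exact my_colon_zero
  · have : q = p := by
      ext r
      rw [hx, my_mem_colon, my_mk_smul,
        Ideal.Quotient.eq_zero_iff_mem]
      exact ⟨fun h => (hp.mem_or_mem h).resolve_right ha, fun h => p.mul_mem_right a h⟩
    simp [this]

lemma my_ass_subset_union (S : Submodule R Q) :
    associatedPrimes R Q ⊆ associatedPrimes R S ∪ associatedPrimes R (Q ⧸ S) := by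
  rintro p hp''
  obtain ⟨hp, x, hx⟩ := isAssociatedPrime_iff.mp (AssociatedPrimes.mem_iff.mp hp'')
  have hmem : ∀ r : R, r ∈ p ↔ r • x = 0 := fun r => by
    rw [hx, my_mem_colon]
  by_cases h : ∀ a : R, a • x ∈ S → a • x = 0
  · right
    refine AssociatedPrimes.mem_iff.mpr (isAssociatedPrime_iff.mpr ⟨hp, S.mkQ x, ?_⟩)
    ext r
    rw [my_mem_colon, ← map_smul, hmem]
    constructor
    · intro hr; rw [hr, map_zero]
    · intro hr
      exact h r ((Submodule.Quotient.mk_eq_zero S).mp hr)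
  · left
    push_neg at h
    obtain ⟨a, haS, ha0⟩ := h
    have hap : a ∉ p := fun hc => ha0 ((hmem a).mp hc)
    refine AssociatedPrimes.mem_iff.mpr (isAssociatedPrime_iff.mpr ⟨hp, ⟨a • x, haS⟩, ?_⟩)
    ext r
    rw [my_mem_colon]
    constructor
    · intro hr
      apply Subtype.ext
      show r • (a • x) = 0
      rw [smul_comm]
      rw [(hmem r).mp hr, smul_zero]
    · intro hr
      have : r • (a • x) = 0 := by simpa using congrArg Subtype.val hr
      rw [smul_smul] at this
      exact (hp.mem_or_mem ((hmem (r * a)).mpr this)).resolve_right hap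

lemma my_ass_span_singleton {q : Q} {p : Ideal R} (hp : p.IsPrime)
    (hq : ∀ r : R, r • q = 0 ↔ r ∈ p) :
    associatedPrimes R (R ∙ q) ⊆ {p} := by
  rintro p' hp''
  obtain ⟨hp', y, hy⟩ := isAssociatedPrime_iff.mp (AssociatedPrimes.mem_iff.mp hp'')
  obtain ⟨a, ha⟩ := Submodule.mem_span_singleton.mp y.2
  have hyval : (y : Q) = a • q := ha.symm
  by_cases h0 : a • q = 0
  · exfalso
    apply hp'.ne_top
    have hy0 : y = 0 := Subtype.ext (by rw [hyval, h0]; rfl)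
    rw [hy, hy0, my_colon_zero]
  · have hap : a ∉ p := fun hc => h0 ((hq a).mpr hc)
    have : p' = p := by
      ext r
      rw [hy, my_mem_colon]
      constructor
      · intro hr
        have : r • (a • q) = 0 := by
          have := congrArg Subtype.val hr
          simpa [hyval] using this
        rw [smul_smul] at this
        exact (hp.mem_or_mem ((hq (r * a)).mp this)).resolve_right hap
      · intro hr
        apply Subtype.ext
        show r • (y : Q) = 0
        rw [hyval, smul_comm, (hq r).mpr hr, smul_zero]
    simp [this]

end Ass

section AssFin
variable {R : Type*} [CommRing R] [IsNoetherianRing R]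

lemma my_ass_finite (M : Type*) [AddCommGroup M] [Module R M] [Module.Finite R M] :
    (associatedPrimes R M).Finite := by
  haveI : IsNoetherian R M := isNoetherian_of_isNoetherianRing_of_finite R M
  by_contra hinf
  -- the set of submodules N with Ass(M ⧸ N) infinite
  set S : Set (Submodule R M) := {N | ¬ (associatedPrimes R (M ⧸ N)).Finite} with hS
  have hne : S.Nonempty := by
    refine ⟨⊥, ?_⟩
    intro hfin
    exact hinf ((LinearEquiv.AssociatedPrimes.eq (Submodule.quotEquivOfEqBot (⊥ : Submodule R M) rfl)) ▸ hfin)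
  obtain ⟨N, hNS, hNmax⟩ := set_has_maximal_iff_noetherian.mpr ‹IsNoetherian R M› S hne
  have hNtop : N ≠ ⊤ := by
    intro h
    apply hNS
    subst h
    haveI : Subsingleton (M ⧸ (⊤ : Submodule R M)) :=
      Submodule.Quotient.subsingleton_iff.mpr rfl
    rw [associatedPrimes.eq_empty_of_subsingleton]
    exact Set.finite_empty
  haveI : Nontrivial (M ⧸ N) := by
    rcases subsingleton_or_nontrivial (M ⧸ N) with h | h
    · exact absurd (Submodule.Quotient.subsingleton_iff.mp h) hNtop
    · exact h
  obtain ⟨p, hp'⟩ := associatedPrimes.nonempty R (M ⧸ N)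
  obtain ⟨hp, q, hpq⟩ := isAssociatedPrime_iff.mp (AssociatedPrimes.mem_iff.mp hp')
  have hq : ∀ r : R, r • q = 0 ↔ r ∈ p := fun r => by
    rw [hpq, my_mem_colon]
  have hq0 : q ≠ 0 := by
    intro h
    apply hp.ne_top
    rw [hpq, h, my_colon_zero]
  set N' : Submodule R M := Submodule.comap N.mkQ (R ∙ q) with hN'
  have hNN' : N ≤ N' := by
    intro x hx
    simp only [hN', Submodule.mem_comap]
    rw [show N.mkQ x = 0 from (Submodule.Quotient.mk_eq_zero N).mpr hx]
    exact Submodule.zero_mem _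
  have hlt : N < N' := by
    rcases lt_or_eq_of_le hNN' with h | h
    · exact h
    · exfalso
      obtain ⟨x, hx⟩ := N.mkQ_surjective q
      have hxN' : x ∈ N' := by
        simp only [hN', Submodule.mem_comap, hx]
        exact Submodule.mem_span_singleton_self q
      rw [← h] at hxN'
      apply hq0
      rw [← hx]
      exact (Submodule.Quotient.mk_eq_zero N).mpr hxN'
  have hmap : Submodule.map N.mkQ N' = (R ∙ q) := by
    rw [hN', Submodule.map_comap_eq, Submodule.range_mkQ, top_inf_eq]
  have hfin' : (associatedPrimes R (M ⧸ N')).Finite := by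
    by_contra hc
    exact hNmax N' hc hlt
  have hsub := my_ass_subset_union (R := R) (Q := M ⧸ N) (Submodule.map N.mkQ N')
  have e : ((M ⧸ N) ⧸ (Submodule.map N.mkQ N')) ≃ₗ[R] M ⧸ N' :=
    Submodule.quotientQuotientEquivQuotient N N' hNN'
  have h1 : associatedPrimes R ((M ⧸ N) ⧸ (Submodule.map N.mkQ N')) = associatedPrimes R (M ⧸ N') :=
    LinearEquiv.AssociatedPrimes.eq e
  have h2 : associatedPrimes R (Submodule.map N.mkQ N') ⊆ {p} := by
    rw [hmap]
    exact my_ass_span_singleton hp hq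
  apply hNS
  apply Set.Finite.subset (Set.Finite.union (Set.finite_singleton p) (h1 ▸ hfin'))
  exact fun pp hpp => (hsub hpp).imp (fun h => h2 h) id

end AssFin
section Depth
variable (A : Type*) [CommRing A] [IsLocalRing A]
  (M : Type*) [AddCommGroup M] [Module A M]

lemma my_depth_zero_iff [Module.Finite A M] [Nontrivial M] :
    moduleDepth A M = 0 ↔ ∀ r ∈ maximalIdeal A, ¬ IsSMulRegular M r := by
  constructor
  · intro h r hr hreg
    have hone : (1 : WithTop ℕ) ∈ {n : WithTop ℕ | ∃ rs : List A,
        (∀ r ∈ rs, r ∈ maximalIdeal A) ∧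
        RingTheory.Sequence.IsRegular M rs ∧ (rs.length : WithTop ℕ) = n} := by
      refine ⟨[r], ?_, ?_, by simp⟩
      · intro x hx; rw [List.mem_singleton] at hx; subst hx; exact hr
      · rw [IsLocalRing.isRegular_iff_isWeaklyRegular_of_subset_maximalIdeal]
        · exact RingTheory.Sequence.IsWeaklyRegular.cons hreg
            (RingTheory.Sequence.IsWeaklyRegular.nil A _)
        · intro x hx; rw [List.mem_singleton] at hx; subst hx; exact hr
    have := le_sSup hone
    rw [moduleDepth] at h
    rw [h] at this
    exact absurd this (by simp)
  · intro h
    rw [moduleDepth]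
    apply le_antisymm _ zero_le
    apply sSup_le
    rintro n ⟨rs, hmem, hreg, hlen⟩
    cases rs with
    | nil => simp at hlen; rw [← hlen]
    | cons r rest =>
      exfalso
      have := (RingTheory.Sequence.isRegular_cons_iff M r rest).mp hreg
      exact h r (hmem r (List.mem_cons_self)) this.1

variable [IsNoetherianRing A]

lemma my_maximalIdeal_mem_ass [Module.Finite A M] [Nontrivial M]
    (h : ∀ r ∈ maximalIdeal A, ¬ IsSMulRegular M r) :
    maximalIdeal A ∈ associatedPrimes A M := by
  have hfin := my_ass_finite (R := A) M
  have hsub : (maximalIdeal A : Set A) ⊆ ⋃ p ∈ associatedPrimes A M, (p : Set A) := by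
    intro r hr
    rw [biUnion_associatedPrimes_eq_compl_regular]
    exact h r hr
  classical
  set s : Finset (Ideal A) := hfin.toFinset with hs
  have hsub2 : (maximalIdeal A : Set A) ⊆ ⋃ p ∈ (s : Set (Ideal A)), (p : Set A) := by
    rwa [hs, Set.Finite.coe_toFinset]
  have hp : ∀ p ∈ s, p ≠ ⊥ → p ≠ ⊥ → p.IsPrime := by
    intro p hps _ _
    rw [hs, Set.Finite.mem_toFinset] at hps
    exact hps.isPrime
  have := (Ideal.subset_union_prime (⊥ : Ideal A) (⊥ : Ideal A) hp).mp hsub2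
  obtain ⟨p, hps, hmp⟩ := this
  rw [hs, Set.Finite.mem_toFinset] at hps
  have hpm : p ≤ maximalIdeal A := IsLocalRing.le_maximalIdeal hps.isPrime.ne_top
  have : p = maximalIdeal A := le_antisymm hpm hmp
  rwa [← this]

lemma my_depth_zero_iff_exists [Module.Finite A M] [Nontrivial M] :
    moduleDepth A M = 0 ↔ ∃ x : M, x ≠ 0 ∧ ∀ r ∈ maximalIdeal A, r • x = 0 := by
  rw [my_depth_zero_iff]
  constructor
  · intro h
    obtain ⟨hp, x, hx⟩ := isAssociatedPrime_iff.mp (AssociatedPrimes.mem_iff.mp (my_maximalIdeal_mem_ass A M h))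
    have hxmem : ∀ r : A, r ∈ maximalIdeal A ↔ r • x = 0 := fun r => by
      rw [hx, my_mem_colon]
    refine ⟨x, ?_, fun r hr => (hxmem r).mp hr⟩
    intro h0
    apply hp.ne_top
    rw [hx, h0, my_colon_zero]
  · rintro ⟨x, hx0, hx⟩ r hr hreg
    exact hx0 (hreg (show r • x = r • 0 by rw [smul_zero, hx r hr]))

end Depth

section Tensor
variable {A B : Type*} [CommRing A] [CommRing B] [Algebra A B]
variable {N : Type*} [AddCommGroup N] [Module A N] [Module B N] [IsScalarTower A B N]

-- B-linearity of lTensor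
lemma my_lTensor_smul {M₁ M₂ : Type*} [AddCommGroup M₁] [Module A M₁]
    [AddCommGroup M₂] [Module A M₂] (f : M₁ →ₗ[A] M₂) (b : B) (z : N ⊗[A] M₁) :
    f.lTensor N (b • z) = b • f.lTensor N z := by
  induction z using TensorProduct.induction_on with
  | zero => simp
  | tmul n m => rw [smul_tmul', LinearMap.lTensor_tmul, LinearMap.lTensor_tmul, smul_tmul']
  | add x y hx hy => rw [smul_add, map_add, map_add, hx, hy, smul_add]

lemma my_lTensor_lsmul {M₁ : Type*} [AddCommGroup M₁] [Module A M₁] (a : A) (z : N ⊗[A] M₁) :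
    (LinearMap.lsmul A M₁ a).lTensor N z = a • z := by
  induction z using TensorProduct.induction_on with
  | zero => simp
  | tmul n m => rw [LinearMap.lTensor_tmul, LinearMap.lsmul_apply, tmul_smul]
  | add x y hx hy => rw [map_add, hx, hy, smul_add]

-- Finiteness of N ⊗[A] M over B
lemma my_finite_tensor (M : Type*) [AddCommGroup M] [Module A M]
    [Module.Finite A M] [Module.Finite B N] :
    Module.Finite B (N ⊗[A] M) := by
  obtain ⟨sn, hsn⟩ := Module.Finite.fg_top (R := B) (M := N)
  obtain ⟨sm, hsm⟩ := Module.Finite.fg_top (R := A) (M := M)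
  rw [Module.finite_def, Submodule.fg_def]
  refine ⟨Set.image2 (· ⊗ₜ[A] ·) (sn : Set N) (sm : Set M),
    Set.Finite.image2 _ sn.finite_toSet sm.finite_toSet, ?_⟩
  apply le_antisymm le_top
  set P := Submodule.span B (Set.image2 (· ⊗ₜ[A] ·) (sn : Set N) (sm : Set M)) with hP
  have key : ∀ (n : N) (m : M), n ⊗ₜ[A] m ∈ P := by
    intro n m
    have hm : m ∈ Submodule.span A (sm : Set M) := by rw [hsm]; trivial
    induction hm using Submodule.span_induction with
    | mem m' hm' =>
      have hn : n ∈ Submodule.span B (sn : Set N) := by rw [hsn]; trivial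
      induction hn using Submodule.span_induction with
      | mem n' hn' => exact Submodule.subset_span (Set.mem_image2_of_mem hn' hm')
      | zero => rw [zero_tmul]; exact Submodule.zero_mem _
      | add x y _ _ hx hy => rw [add_tmul]; exact Submodule.add_mem _ hx hy
      | smul b x _ hx => rw [← smul_tmul']; exact Submodule.smul_mem _ b hx
    | zero => rw [tmul_zero]; exact Submodule.zero_mem _
    | add x y _ _ hx hy => rw [tmul_add]; exact Submodule.add_mem _ hx hy
    | smul a x _ hx =>
      rw [tmul_smul, ← algebraMap_smul B a]
      exact Submodule.smul_mem _ _ hx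
  intro z _
  induction z using TensorProduct.induction_on with
  | zero => exact Submodule.zero_mem _
  | add x y hx hy => exact Submodule.add_mem _ (hx trivial) (hy trivial)
  | tmul n m => exact key n m
end Tensor

lemma my_equiv_pi_residue (A : Type*) [CommRing A] [IsLocalRing A]
    (V : Type*) [AddCommGroup V] [Module A V] [Module.Finite A V]
    (hkill : ∀ a ∈ maximalIdeal A, ∀ v : V, a • v = 0) :
    ∃ d : ℕ, Nonempty (V ≃ₗ[A] (Fin d → ResidueField A)) := by
  have ht : Module.IsTorsionBySet A V (maximalIdeal A : Set A) := by
    intro v a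
    exact hkill a a.2 v
  rw [Module.isTorsionBySet_iff_is_torsion_by_span] at ht
  rw [Ideal.span_eq] at ht
  letI : Module (ResidueField A) V := ht.module
  haveI : IsScalarTower A (ResidueField A) V := ht.isScalarTower
  haveI : Module.Finite (ResidueField A) V :=
    Module.Finite.of_restrictScalars_finite A (ResidueField A) V
  let b := Module.finBasis (ResidueField A) V
  exact ⟨_, ⟨(b.equivFun).restrictScalars A⟩⟩

lemma my_map_maximal {A B : Type*} [CommRing A] [CommRing B] [IsLocalRing A] [IsLocalRing B]
    [Algebra A B] [IsLocalHom (algebraMap A B)] {a : A} (ha : a ∈ maximalIdeal A) :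
    algebraMap A B a ∈ maximalIdeal B := by
  rw [mem_maximalIdeal, mem_nonunits_iff] at *
  exact fun h => ha (IsLocalHom.map_nonunit a h)

lemma my_maximal_le_jacobson_ann {R M : Type*} [CommRing R] [IsLocalRing R] [AddCommGroup M]
    [Module R M] [Nontrivial M] :
    maximalIdeal R ≤ (Module.annihilator R M).jacobson := by
  have hne : Module.annihilator R M ≠ ⊤ := by
    intro h
    obtain ⟨x, hx⟩ := exists_ne (0 : M)
    apply hx
    have : (1 : R) ∈ Module.annihilator R M := h ▸ trivial
    simpa using Module.mem_annihilator.mp this x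
  rw [IsLocalRing.jacobson_eq_maximalIdeal _ hne]

lemma my_smul_top_ne_top {A : Type*} (B : Type*) [CommRing A] [CommRing B] [IsLocalRing A]
    [IsLocalRing B] [Algebra A B] [IsLocalHom (algebraMap A B)]
    (N : Type*) [AddCommGroup N] [Module A N] [Module B N] [IsScalarTower A B N]
    [Module.Finite B N] [Nontrivial N] :
    ((maximalIdeal A) • ⊤ : Submodule A N) ≠ ⊤ := by
  intro h
  have htop : ((maximalIdeal B) • ⊤ : Submodule B N) = ⊤ := by
    apply le_antisymm le_top
    intro n _
    have hn : n ∈ ((maximalIdeal A) • ⊤ : Submodule A N) := by rw [h]; trivial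
    refine Submodule.smul_induction_on hn ?_ ?_
    · intro a ha n' _
      rw [← algebraMap_smul B a n']
      exact Submodule.smul_mem_smul (my_map_maximal (B := B) ha) trivial
    · intro x y hx hy
      exact Submodule.add_mem _ hx hy
  exact Submodule.top_ne_ideal_smul_of_le_jacobson_annihilator
    my_maximal_le_jacobson_ann htop.symm

lemma my_nontrivial_tensor_residue {A : Type*} (B : Type*) [CommRing A] [CommRing B]
    [IsLocalRing A] [IsLocalRing B] [Algebra A B] [IsLocalHom (algebraMap A B)]
    (N : Type*) [AddCommGroup N] [Module A N] [Module B N] [IsScalarTower A B N]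
    [Module.Finite B N] [Nontrivial N] : Nontrivial (N ⊗[A] ResidueField A) := by
  haveI : Nontrivial (N ⧸ ((maximalIdeal A) • ⊤ : Submodule A N)) :=
    Submodule.Quotient.nontrivial_iff.mpr
      (lt_of_le_of_ne le_top (my_smul_top_ne_top B N)).ne
  exact Equiv.nontrivial (tensorQuotEquivQuotSMul N (maximalIdeal A)).toEquiv

lemma my_nontrivial_tensor {A : Type*} (B : Type*) [CommRing A] [CommRing B]
    [IsLocalRing A] [IsLocalRing B] [Algebra A B] [IsLocalHom (algebraMap A B)]
    (N : Type*) [AddCommGroup N] [Module A N] [Module B N] [IsScalarTower A B N]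
    [Module.Finite B N] [Nontrivial N] (M : Type*) [AddCommGroup M] [Module A M]
    [Module.Finite A M] [Nontrivial M] :
    Nontrivial (N ⊗[A] M) := by
  set V := M ⧸ ((maximalIdeal A) • ⊤ : Submodule A M) with hV
  haveI : Nontrivial V := by
    refine Submodule.Quotient.nontrivial_iff.mpr (lt_of_le_of_ne le_top ?_).ne
    exact (Submodule.top_ne_ideal_smul_of_le_jacobson_annihilator
      my_maximal_le_jacobson_ann).symm
  have hkill : ∀ a ∈ maximalIdeal A, ∀ v : V, a • v = 0 := by
    intro a ha v
    have ht : Module.IsTorsionBySet A V ((maximalIdeal A : Set A)) :=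
      Module.isTorsionBySet_quotient_ideal_smul M (maximalIdeal A)
    exact @ht v ⟨a, ha⟩
  obtain ⟨d, ⟨e⟩⟩ := my_equiv_pi_residue A V hkill
  have hd : Nonempty (Fin d) := by
    by_contra hempty
    haveI : IsEmpty (Fin d) := not_nonempty_iff.mp hempty
    haveI : Subsingleton (Fin d → ResidueField A) := inferInstance
    haveI := e.toEquiv.subsingleton
    exact not_subsingleton V ‹_›
  obtain ⟨i⟩ := hd
  set π : M →ₗ[A] ResidueField A :=
    (LinearMap.proj i) ∘ₗ e.toLinearMap ∘ₗ (Submodule.mkQ _) with hπ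
  have hsurj : Function.Surjective π := by
    intro y
    obtain ⟨v, hv⟩ := e.surjective (fun _ => y)
    obtain ⟨x, hx⟩ := Submodule.mkQ_surjective _ v
    refine ⟨x, ?_⟩
    simp [hπ, hx, hv]
  have hTsurj : Function.Surjective (π.lTensor N) := LinearMap.lTensor_surjective N hsurj
  haveI := my_nontrivial_tensor_residue (A := A) B N
  obtain ⟨u, v, huv⟩ := exists_pair_ne (N ⊗[A] ResidueField A)
  obtain ⟨u', hu'⟩ := hTsurj u
  obtain ⟨v', hv'⟩ := hTsurj v
  exact ⟨⟨u', v', fun h => huv (by rw [← hu', ← hv', h])⟩⟩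


section Keys
variable {A B : Type*} [CommRing A] [CommRing B] [IsLocalRing A] [IsLocalRing B]
    [Algebra A B] [IsLocalHom (algebraMap A B)]
    (N : Type*) [AddCommGroup N] [Module A N] [Module B N] [IsScalarTower A B N]
    [Module.Flat A N]

lemma my_key2 (M : Type*) [AddCommGroup M] [Module A M]
    (x₀ : M) (h0 : x₀ ≠ 0) (hk : ∀ a ∈ maximalIdeal A, a • x₀ = 0)
    (y : N ⊗[A] ResidueField A) (hy : y ≠ 0) (hym : ∀ s ∈ maximalIdeal B, s • y = 0) :
    ∃ z : N ⊗[A] M, z ≠ 0 ∧ ∀ s ∈ maximalIdeal B, s • z = 0 := by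
  have hker : (maximalIdeal A : Submodule A A) ≤
      LinearMap.ker (LinearMap.toSpanSingleton A M x₀) := by
    intro a ha
    rw [LinearMap.mem_ker, LinearMap.toSpanSingleton_apply]
    exact hk a ha
  set j : ResidueField A →ₗ[A] M :=
    Submodule.liftQ _ (LinearMap.toSpanSingleton A M x₀) hker with hj
  have hinj : Function.Injective j := by
    rw [← LinearMap.ker_eq_bot, hj]
    apply Submodule.ker_liftQ_eq_bot
    intro a ha
    rw [LinearMap.mem_ker, LinearMap.toSpanSingleton_apply] at ha
    by_contra hnot
    have hu : IsUnit a := by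
      by_contra hnu
      exact hnot (IsLocalRing.mem_maximalIdeal a |>.mpr hnu)
    obtain ⟨u, rfl⟩ := hu
    apply h0
    have h1 : ((u⁻¹ : Aˣ) : A) • ((u : A) • x₀) = x₀ := by
      rw [← mul_smul, Units.inv_mul, one_smul]
    rw [← h1, ha, smul_zero]
  have hTinj : Function.Injective (j.lTensor N) :=
    Module.Flat.lTensor_preserves_injective_linearMap j hinj
  refine ⟨j.lTensor N y, ?_, ?_⟩
  · intro h
    exact hy (hTinj (by rw [h, map_zero]))
  · intro s hs
    rw [← my_lTensor_smul, hym s hs, map_zero]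

lemma my_key1 [IsNoetherianRing A] (M : Type*) [AddCommGroup M] [Module A M] [Module.Finite A M]
    (x : N ⊗[A] M) (hx : x ≠ 0) (hxm : ∀ s ∈ maximalIdeal B, s • x = 0) :
    ∃ y : N ⊗[A] ResidueField A, y ≠ 0 ∧ ∀ s ∈ maximalIdeal B, s • y = 0 := by
  classical
  have hxa : ∀ a ∈ maximalIdeal A, a • x = 0 := fun a ha => by
    rw [← algebraMap_smul B a x]
    exact hxm _ (my_map_maximal ha)
  obtain ⟨t, ht⟩ := IsNoetherian.noetherian (maximalIdeal A)
  set φ : M →ₗ[A] (↥t → M) :=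
    LinearMap.pi (fun i => LinearMap.lsmul A M (i : A)) with hφ
  set K := LinearMap.ker φ with hK
  have hexact : Function.Exact (K.subtype) φ := φ.exact_subtype_ker_map
  have hTexact := Module.Flat.lTensor_exact N hexact
  set e := TensorProduct.piRight A A N (fun _ : ↥t => M) with he
  have hcomp : ∀ i : ↥t,
      (LinearMap.proj i) ∘ₗ (e.toLinearMap ∘ₗ (φ.lTensor N))
        = (LinearMap.lsmul A M (i : A)).lTensor N := by
    intro i
    apply TensorProduct.ext'
    intro n m
    simp [he, hφ]
  have hφx : φ.lTensor N x = 0 := by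
    apply e.injective
    rw [map_zero]
    funext i
    have h1 : e (φ.lTensor N x) i
        = ((LinearMap.proj i) ∘ₗ (e.toLinearMap ∘ₗ (φ.lTensor N))) x := rfl
    rw [h1, hcomp i, my_lTensor_lsmul]
    have : (i : A) ∈ maximalIdeal A := by
      rw [← ht]
      exact Ideal.subset_span i.2
    rw [hxa _ this]
    rfl
  obtain ⟨y, hy⟩ := (hTexact x).mp hφx
  have hTinj : Function.Injective ((K.subtype).lTensor N) :=
    Module.Flat.lTensor_preserves_injective_linearMap _ K.injective_subtype
  have hyne : y ≠ 0 := fun h => hx (by rw [← hy, h, map_zero])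
  have hym : ∀ s ∈ maximalIdeal B, s • y = 0 := by
    intro s hs
    apply hTinj
    rw [my_lTensor_smul, hy, map_zero, hxm s hs]
  have hkillK : ∀ a ∈ maximalIdeal A, ∀ v : K, a • v = 0 := by
    intro a ha v
    have hv : φ (v : M) = 0 := v.2
    have hgen : ∀ c ∈ t, c • (v : M) = 0 := by
      intro c hc
      have := congrFun (congrArg (fun f => (f : ↥t → M)) hv) ⟨c, hc⟩
      simpa [hφ] using this
    have hall : ∀ b, b ∈ Submodule.span A (t : Set A) → b • (v : M) = 0 := by
      intro b hb
      induction hb using Submodule.span_induction with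
      | mem c hc => exact hgen c hc
      | zero => rw [zero_smul]
      | add p q _ _ hp hq => rw [add_smul, hp, hq, add_zero]
      | smul r c _ hc => rw [smul_eq_mul, mul_smul, hc, smul_zero]
    have hav : a • (v : M) = 0 := hall a (by rw [ht]; exact ha)
    exact Subtype.ext (by simpa using hav)
  haveI : IsNoetherian A M := isNoetherian_of_isNoetherianRing_of_finite A M
  haveI : Module.Finite A K := Module.Finite.iff_fg.mpr (IsNoetherian.noetherian K)
  obtain ⟨d, ⟨eK⟩⟩ := my_equiv_pi_residue A K hkillK
  set y2 := (eK.toLinearMap).lTensor N y with hy2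
  have hy2ne : y2 ≠ 0 := fun h =>
    hyne ((Module.Flat.lTensor_preserves_injective_linearMap eK.toLinearMap eK.injective)
      (show (LinearMap.lTensor N eK.toLinearMap) y = (LinearMap.lTensor N eK.toLinearMap) 0 by
        rw [map_zero, ← hy2]; exact h))
  have hy2m : ∀ s ∈ maximalIdeal B, s • y2 = 0 := by
    intro s hs
    rw [hy2, ← my_lTensor_smul, hym s hs, map_zero]
  set eP := TensorProduct.piRight A B N (fun _ : Fin d => ResidueField A) with heP
  set w := eP y2 with hw
  have hwne : w ≠ 0 := fun h => hy2ne (eP.injective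
    (show eP y2 = eP 0 by rw [map_zero, ← hw]; exact h))
  obtain ⟨i, hi⟩ := Function.ne_iff.mp hwne
  refine ⟨w i, hi, ?_⟩
  intro s hs
  have : s • w = 0 := by
    rw [hw, ← map_smul, hy2m s hs, map_zero]
  calc s • w i = (s • w) i := rfl
  _ = 0 := by rw [this]; rfl

end Keys

/-- Let `A → B` be a local homomorphism of Noetherian local rings, `F` the residue field
of `A`, `M` a nonzero finitely generated `A`-module and `N` a nonzero finitely generated
`B`-module flat over `A`.  Then `N ⊗[A] M` has depth zero (over `B`) iff `N ⊗[A] F` has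
depth zero (over `B`) and `M` has depth zero (over `A`). -/
theorem depth_tensor_eq_zero_iff
    {A B : Type*} [CommRing A] [CommRing B] [IsNoetherianRing A] [IsNoetherianRing B]
    [IsLocalRing A] [IsLocalRing B] [Algebra A B] [IsLocalHom (algebraMap A B)]
    (M : Type*) [AddCommGroup M] [Module A M] [Module.Finite A M] [Nontrivial M]
    (N : Type*) [AddCommGroup N] [Module A N] [Module B N] [IsScalarTower A B N]
    [Module.Finite B N] [Nontrivial N] [Module.Flat A N] :
    moduleDepth B (N ⊗[A] M) = 0 ↔
      moduleDepth B (N ⊗[A] ResidueField A) = 0 ∧ moduleDepth A M = 0 := by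
  haveI : Module.Finite A (ResidueField A) :=
    Module.Finite.of_surjective (Submodule.mkQ _) (Submodule.mkQ_surjective _)
  haveI : Module.Finite B (N ⊗[A] M) := my_finite_tensor M
  haveI : Module.Finite B (N ⊗[A] ResidueField A) := my_finite_tensor (ResidueField A)
  haveI : Nontrivial (N ⊗[A] M) := my_nontrivial_tensor B N M
  haveI : Nontrivial (N ⊗[A] ResidueField A) := my_nontrivial_tensor_residue B N
  constructor
  · intro h
    obtain ⟨x, hx0, hxm⟩ := (my_depth_zero_iff_exists B (N ⊗[A] M)).mp h
    constructor
    · obtain ⟨y, hy0, hym⟩ := my_key1 N M x hx0 hxm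
      exact (my_depth_zero_iff_exists B (N ⊗[A] ResidueField A)).mpr ⟨y, hy0, hym⟩
    · rw [my_depth_zero_iff A M]
      intro r hr hreg
      have hrinj : Function.Injective ((LinearMap.lsmul A M r).lTensor N) :=
        Module.Flat.lTensor_preserves_injective_linearMap (LinearMap.lsmul A M r) hreg
      have h1 : (LinearMap.lsmul A M r).lTensor N x = 0 := by
        rw [my_lTensor_lsmul, ← algebraMap_smul B r x, hxm _ (my_map_maximal hr)]
      exact hx0 (hrinj (by rw [h1, map_zero]))
  · rintro ⟨h1, h2⟩
    obtain ⟨y, hy0, hym⟩ := (my_depth_zero_iff_exists B (N ⊗[A] ResidueField A)).mp h1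
    obtain ⟨x₀, hx0, hx0m⟩ := (my_depth_zero_iff_exists A M).mp h2
    obtain ⟨z, hz0, hzm⟩ := my_key2 N M x₀ hx0 hx0m y hy0 hym
    exact (my_depth_zero_iff_exists B (N ⊗[A] M)).mpr ⟨z, hz0, hzm⟩
end

section
/- Let $A \to B$ be a flat homomorphism of Noetherian rings and let $M$ be a finitely generated $A$-module. Then the set of associated primes of the $B$-module $M \otimes_A B$ equals the union, over all associated primes $\mathfrak p$ of $M$, of the sets of associated primes of the $B$-module $B/\mathfrak p B$. -/
open TensorProduct LinearMap

section ModLemmas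

variable {B : Type*} [CommRing B] {X Y Z W : Type*}
  [AddCommGroup X] [Module B X] [AddCommGroup Y] [Module B Y]
  [AddCommGroup Z] [Module B Z] [AddCommGroup W] [Module B W]

lemma colon_bot_singleton_eq (x : X) :
    (⊥ : Submodule B X).colon {x} = (Submodule.span B {x}).annihilator := by
  ext r
  rw [Submodule.mem_colon_singleton, Submodule.mem_bot, Submodule.mem_annihilator_span_singleton]

lemma iap_mk {P : Ideal B} (hP : P.IsPrime) (x : X)
    (hx : P = (Submodule.span B {x}).annihilator) : IsAssociatedPrime P X :=
  ⟨hP, x, by rw [colon_bot_singleton_eq, ← hx, hP.radical]⟩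

lemma iap_iff' [IsNoetherianRing B] {P : Ideal B} :
    IsAssociatedPrime P X ↔ P.IsPrime ∧ ∃ x : X, P = (Submodule.span B {x}).annihilator := by
  rw [isAssociatedPrime_iff]
  simp only [colon_bot_singleton_eq]

/-- Annihilators are preserved by injective maps. -/
lemma ann_span_map_eq {f : X →ₗ[B] Y} (hf : Function.Injective f) (x : X) :
    (Submodule.span B {f x}).annihilator = (Submodule.span B {x}).annihilator := by
  ext r
  rw [Submodule.mem_annihilator_span_singleton, Submodule.mem_annihilator_span_singleton,
    ← map_smul, ← map_zero f, hf.eq_iff]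

lemma isAssociatedPrime_of_mem_range {f : X →ₗ[B] Y} (hf : Function.Injective f)
    {P : Ideal B} (hP : IsAssociatedPrime P Y) {x : X}
    (hx : P = (Submodule.span B {f x}).annihilator) : IsAssociatedPrime P X :=
  iap_mk hP.1 x (hx.trans (ann_span_map_eq hf x))

/-- Key dichotomy: associated prime of the middle of a short exact sequence. -/
lemma isAssociatedPrime_exact [IsNoetherianRing B] {f : W →ₗ[B] X} {g : X →ₗ[B] Z}
    (hf : Function.Injective f) (hfg : Function.Exact f g) {P : Ideal B}
    (h : IsAssociatedPrime P X) : IsAssociatedPrime P W ∨ IsAssociatedPrime P Z := by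
  obtain ⟨hP, x, hx⟩ := iap_iff'.mp h
  have hxmem : ∀ b : B, b ∈ P ↔ b • x = 0 := fun b => by
    rw [hx, Submodule.mem_annihilator_span_singleton]
  by_cases hcase : ∃ b : B, b • x ∈ Set.range f ∧ b • x ≠ 0
  · left
    obtain ⟨b, ⟨w, hw⟩, hne⟩ := hcase
    have hbP : b ∉ P := fun hb => hne ((hxmem b).mp hb)
    refine iap_mk hP w ?_
    ext r
    rw [Submodule.mem_annihilator_span_singleton]
    constructor
    · intro hr
      apply hf
      rw [map_smul, hw, map_zero, smul_comm, (hxmem r).mp hr, smul_zero]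
    · intro hr
      have hmem : (r * b) • x = 0 := by
        rw [mul_smul, ← hw, ← map_smul, hr, map_zero]
      rcases hP.mem_or_mem ((hxmem _).mpr hmem) with h' | h'
      · exact h'
      · exact absurd h' hbP
  · right
    push_neg at hcase
    refine iap_mk hP (g x) ?_
    ext r
    rw [Submodule.mem_annihilator_span_singleton]
    constructor
    · intro hr
      rw [← map_smul, (hxmem r).mp hr, map_zero]
    · intro hr
      rw [← map_smul] at hr
      exact (hxmem r).mpr (hcase _ ((hfg (r • x)).mp hr))

/-- An associated prime of a finite power of `X` is an associated prime of `X`. -/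
lemma isAssociatedPrime_pi [IsNoetherianRing B] {n : ℕ} {P : Ideal B}
    (h : IsAssociatedPrime P (Fin n → X)) : IsAssociatedPrime P X := by
  obtain ⟨hP, x, hx⟩ := iap_iff'.mp h
  have hxmem : ∀ b : B, b ∈ P ↔ b • x = 0 := fun b => by
    rw [hx, Submodule.mem_annihilator_span_singleton]
  by_cases hcase : ∃ i, (Submodule.span B {x i}).annihilator ≤ P
  · obtain ⟨i, hi⟩ := hcase
    refine iap_mk hP (x i) (le_antisymm ?_ hi)
    intro r hr
    rw [Submodule.mem_annihilator_span_singleton]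
    have := (hxmem r).mp hr
    exact congrFun this i
  · push_neg at hcase
    exfalso
    have : ∀ i, ∃ b : B, b • x i = 0 ∧ b ∉ P := by
      intro i
      obtain ⟨b, hb1, hb2⟩ := Set.not_subset.mp (hcase i)
      exact ⟨b, (Submodule.mem_annihilator_span_singleton _ _).mp hb1, hb2⟩
    choose b hb1 hb2 using this
    have hprod : (∏ i, b i) ∈ P := by
      rw [hxmem]
      funext j
      rw [Pi.smul_apply, Pi.zero_apply, ← Finset.prod_erase_mul Finset.univ b
        (Finset.mem_univ j), mul_smul, hb1, smul_zero]
    haveI := hP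
    obtain ⟨i, -, hi⟩ := Ideal.IsPrime.prod_mem_iff.mp hprod
    exact hb2 i hi

end ModLemmas

section Kill

variable {A : Type*} [CommRing A]

/-- A finitely generated module all of whose elements are torsion w.r.t. a submonoid is
killed by a single element of the submonoid. -/
lemma exists_uniform_kill {W : Type*} [AddCommGroup W] [Module A W]
    [Module.Finite A W]
    (S : Submonoid A) (h : ∀ y : W, ∃ s ∈ S, s • y = 0) :
    ∃ c ∈ S, ∀ y : W, c • y = 0 := by
  classical
  obtain ⟨t, ht⟩ := Module.finite_def.mp (inferInstance : Module.Finite A W)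
  choose s hsS hs using h
  refine ⟨∏ y ∈ t, s y, Submonoid.prod_mem _ (fun y _ => hsS y), fun w => ?_⟩
  have hmem : w ∈ Submodule.span A (t : Set W) := by rw [ht]; exact Submodule.mem_top
  induction hmem using Submodule.span_induction with
  | mem y hy => rw [← Finset.prod_erase_mul t s hy, mul_smul, hs y, smul_zero]
  | zero => simp
  | add y z _ _ ihy ihz => rw [smul_add, ihy, ihz, add_zero]
  | smul a y _ ih => rw [smul_comm, ih, smul_zero]

end Kill

section Tensor

variable {A B : Type*} [CommRing A] [CommRing B] [Algebra A B]

/-- If `c : A` kills the module `W` and `c` is not in the contraction of `P`, then `P` is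
not an associated prime of `B ⊗[A] W`. -/
lemma not_isAssociatedPrime_of_kill [IsNoetherianRing B] {W : Type*} [AddCommGroup W] [Module A W] {c : A}
    (hkill : ∀ y : W, c • y = 0) {P : Ideal B} (hc : c ∉ P.comap (algebraMap A B)) :
    ¬ IsAssociatedPrime P (B ⊗[A] W) := by
  intro h
  obtain ⟨hP, z, hz⟩ := iap_iff'.mp h
  have hz0 : ∀ t : B ⊗[A] W, algebraMap A B c • t = 0 := by
    intro t
    induction t using TensorProduct.induction_on with
    | zero => simp
    | tmul b y =>
      rw [smul_tmul', algebraMap_smul, smul_tmul, hkill, tmul_zero]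
    | add u v hu hv => rw [smul_add, hu, hv, add_zero]
  apply hc
  rw [Ideal.mem_comap, hz, Submodule.mem_annihilator_span_singleton]
  exact hz0 z

/-- `B ⊗[A] (A ⧸ p)` is isomorphic to `B ⧸ pB` as `B`-algebras. -/
noncomputable def tensorQuotEquiv (p : Ideal A) :
    (B ⊗[A] (A ⧸ p)) ≃ₐ[B] (B ⧸ p.map (algebraMap A B)) := by
  refine AlgEquiv.ofAlgHom
    (Algebra.TensorProduct.lift (Ideal.Quotient.mkₐ B (p.map (algebraMap A B)))
      (Ideal.Quotient.liftₐ p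
        ((Ideal.Quotient.mkₐ A (p.map (algebraMap A B))).comp (Algebra.ofId A B))
        (fun a ha => ?_))
      (fun _ _ => Commute.all _ _))
    (Ideal.Quotient.liftₐ (p.map (algebraMap A B)) Algebra.TensorProduct.includeLeft
      (fun b hb => ?_)) ?_ ?_
  · simp only [AlgHom.comp_apply, Ideal.Quotient.mkₐ_eq_mk, Algebra.ofId_apply,
      Ideal.Quotient.eq_zero_iff_mem]
    exact Ideal.mem_map_of_mem _ ha
  · have : p.map (algebraMap A B) ≤
        RingHom.ker (Algebra.TensorProduct.includeLeft :
          B →ₐ[B] B ⊗[A] (A ⧸ p)).toRingHom := by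
      rw [Ideal.map_le_iff_le_comap]
      intro a ha
      simp only [Ideal.mem_comap, RingHom.mem_ker, AlgHom.toRingHom_eq_coe,
        RingHom.coe_coe, Algebra.TensorProduct.includeLeft_apply]
      rw [Algebra.algebraMap_eq_smul_one, smul_tmul, ← Algebra.algebraMap_eq_smul_one,
        Ideal.Quotient.algebraMap_eq, Ideal.Quotient.eq_zero_iff_mem.mpr ha, tmul_zero]
    exact this hb
  · apply Ideal.Quotient.algHom_ext
    ext
  · apply Algebra.TensorProduct.ext
    · ext
    · apply Ideal.Quotient.algHom_ext
      ext

/-- Injectivity of base change along a flat algebra. -/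
lemma baseChange_injective [Module.Flat A B] {M N : Type*} [AddCommGroup M] [Module A M]
    [AddCommGroup N] [Module A N] {φ : M →ₗ[A] N} (hφ : Function.Injective φ) :
    Function.Injective (φ.baseChange B) := by
  rw [show ⇑(φ.baseChange B) = ⇑(φ.lTensor B) from LinearMap.baseChange_eq_ltensor _]
  exact Module.Flat.lTensor_preserves_injective_linearMap φ hφ

lemma baseChange_exact [Module.Flat A B] {M N K : Type*} [AddCommGroup M] [Module A M]
    [AddCommGroup N] [Module A N] [AddCommGroup K] [Module A K]
    {φ : M →ₗ[A] N} {ψ : N →ₗ[A] K} (h : Function.Exact φ ψ) :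
    Function.Exact (φ.baseChange B) (ψ.baseChange B) := by
  rw [show ⇑(φ.baseChange B) = ⇑(φ.lTensor B) from LinearMap.baseChange_eq_ltensor _,
    show ⇑(ψ.baseChange B) = ⇑(ψ.lTensor B) from LinearMap.baseChange_eq_ltensor _]
  exact Module.Flat.lTensor_exact B h

/-- The easy inclusion. -/
lemma associatedPrimes_quotient_subset [IsNoetherianRing A] [Module.Flat A B] {M : Type*} [AddCommGroup M]
    [Module A M] {p : Ideal A} (hp : p ∈ associatedPrimes A M) :
    associatedPrimes B (B ⧸ p.map (algebraMap A B)) ⊆ associatedPrimes B (B ⊗[A] M) := by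
  obtain ⟨hp', m, hm⟩ := iap_iff'.mp (AssociatedPrimes.mem_iff.mp hp)
  have hle : p ≤ LinearMap.ker (LinearMap.toSpanSingleton A M m) := by
    intro a ha
    rw [LinearMap.mem_ker, LinearMap.toSpanSingleton_apply]
    exact (Submodule.mem_annihilator_span_singleton m a).mp (hm ▸ ha)
  set φ : (A ⧸ p) →ₗ[A] M := Submodule.liftQ p (LinearMap.toSpanSingleton A M m) hle with hφdef
  have hφ : Function.Injective φ := by
    rw [← LinearMap.ker_eq_bot]
    apply Submodule.ker_liftQ_eq_bot
    intro a ha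
    rw [LinearMap.mem_ker, LinearMap.toSpanSingleton_apply] at ha
    exact hm ▸ (Submodule.mem_annihilator_span_singleton m a).mpr ha
  rw [← LinearEquiv.AssociatedPrimes.eq (tensorQuotEquiv (A := A) (B := B) p).toLinearEquiv]
  exact associatedPrimes.subset_of_injective (baseChange_injective hφ)

end Tensor

set_option maxHeartbeats 1000000 in
/-- Let `A → B` be a flat homomorphism of Noetherian rings and `M` a finitely generated
`A`-module.  Then the associated primes of the `B`-module `B ⊗[A] M` are exactly the
union, over the associated primes `𝔭` of `M`, of the associated primes of `B ⧸ 𝔭B`. -/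
theorem associatedPrimes_baseChange
    {A B : Type*} [CommRing A] [CommRing B] [IsNoetherianRing A] [IsNoetherianRing B]
    [Algebra A B] [Module.Flat A B]
    (M : Type*) [AddCommGroup M] [Module A M] [Module.Finite A M] :
    associatedPrimes B (B ⊗[A] M) =
      ⋃ p ∈ associatedPrimes A M,
        associatedPrimes B (B ⧸ Ideal.map (algebraMap A B) p) := by
  apply Set.Subset.antisymm
  · intro P hP
    obtain ⟨hPprime, x, hx⟩ := iap_iff'.mp (AssociatedPrimes.mem_iff.mp hP)
    have hxP : ∀ b : B, b ∈ P ↔ b • x = 0 := fun b => by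
      rw [hx, Submodule.mem_annihilator_span_singleton]
    set p : Ideal A := P.comap (algebraMap A B) with hpdef
    haveI := hPprime
    haveI hpprime : p.IsPrime := Ideal.IsPrime.comap _
    -- generators of p
    obtain ⟨n, a, hgen⟩ :=
      Submodule.fg_iff_exists_fin_generating_family.mp (IsNoetherian.noetherian p)
    set ρ : M →ₗ[A] (Fin n → M) := LinearMap.pi (fun i => a i • LinearMap.id) with hρdef
    set N : Submodule A M := LinearMap.ker ρ with hNdef
    have haip : ∀ i, a i ∈ p := fun i => hgen ▸ Submodule.subset_span ⟨i, rfl⟩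
    -- p kills N
    have hkillN : ∀ b ∈ p, ∀ y ∈ N, b • y = 0 := by
      intro b hb
      rw [← hgen] at hb
      induction hb using Submodule.span_induction with
      | mem c hc =>
        obtain ⟨i, rfl⟩ := hc
        intro y hy
        exact congrFun (LinearMap.mem_ker.mp hy) i
      | zero => intro y _; rw [zero_smul]
      | add b c _ _ ihb ihc => intro y hy; rw [add_smul, ihb y hy, ihc y hy, add_zero]
      | smul r b _ ih => intro y hy; rw [smul_eq_mul, mul_smul, ih y hy, smul_zero]
    -- x is killed by ρ base-changed to B
    have hρx : (ρ.baseChange B) x = 0 := by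
      have hcomp : ∀ z : B ⊗[A] M,
          TensorProduct.piRightHom A B B (fun _ : Fin n => M) ((ρ.baseChange B) z)
            = fun i => a i • z := by
        intro z
        induction z using TensorProduct.induction_on with
        | zero => funext i; simp
        | tmul b m =>
          funext i
          simp only [LinearMap.baseChange_tmul, TensorProduct.piRightHom_tmul]
          show b ⊗ₜ[A] (a i • m) = a i • (b ⊗ₜ[A] m)
          rw [TensorProduct.tmul_smul]
        | add u v hu hv =>
          rw [map_add, map_add, hu, hv]
          funext i
          simp [smul_add]
      apply (TensorProduct.piRight A B B (fun _ : Fin n => M)).injective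
      rw [map_zero, TensorProduct.piRight_apply, hcomp]
      funext i
      have : algebraMap A B (a i) • x = 0 := (hxP _).mp (haip i)
      rw [Pi.zero_apply, ← this, algebraMap_smul]
    obtain ⟨x', hx'⟩ :=
      (baseChange_exact (B := B) (LinearMap.exact_subtype_ker_map ρ) x).mp hρx
    have hinjN : Function.Injective (N.subtype.baseChange B) :=
      baseChange_injective N.injective_subtype
    have hPx' : IsAssociatedPrime P (B ⊗[A] ↥N) :=
      isAssociatedPrime_of_mem_range hinjN (iap_mk hPprime x hx) (by rw [hx']; exact hx)
    set S := p.primeCompl with hSdef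
    set N' : Submodule A ↥N := Submodule.torsion' A ↥N S with hN'def
    have hcnotp : ∀ c ∈ S, c ∉ P.comap (algebraMap A B) := fun c hc => hc
    rcases isAssociatedPrime_exact (baseChange_injective N'.injective_subtype)
        (baseChange_exact (B := B) (LinearMap.exact_subtype_mkQ N')) hPx' with hW | hZ
    · -- torsion part: contradiction
      exfalso
      haveI : Module.Finite A ↥N' := Module.Finite.iff_fg.mpr (IsNoetherian.noetherian N')
      obtain ⟨c, hcS, hc⟩ := exists_uniform_kill (A := A) S (fun (y : ↥N') => by
        obtain ⟨s, hs⟩ := (Submodule.mem_torsion'_iff (R := A) (↥S) y.1).mp y.2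
        refine ⟨s.1, s.2, Subtype.ext ?_⟩
        exact_mod_cast congrArg Subtype.val hs)
      exact not_isAssociatedPrime_of_kill hc (hcnotp c hcS) hW
    · -- quotient part
      set Q := (↥N ⧸ N') with hQdef
      -- Q is nontrivial
      have hQne : ∃ q : Q, q ≠ 0 := by
        by_contra hq
        push_neg at hq
        haveI : Subsingleton Q := ⟨fun q q' => (hq q).trans (hq q').symm⟩
        exact not_isAssociatedPrime_of_subsingleton hZ
      -- torsion-freeness of Q
      have htfQ : ∀ c ∈ S, ∀ q : Q, c • q = 0 → q = 0 := by
        intro c hc q hcq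
        obtain ⟨y, rfl⟩ := N'.mkQ_surjective q
        rw [← map_smul] at hcq
        rw [Submodule.mkQ_apply, Submodule.Quotient.mk_eq_zero] at hcq ⊢
        obtain ⟨t, ht⟩ := (Submodule.mem_torsion'_iff (R := A) (↥S) _).mp hcq
        refine (Submodule.mem_torsion'_iff (R := A) (↥S) _).mpr ⟨⟨t.1 * c, S.mul_mem t.2 hc⟩, ?_⟩
        show (t.1 * c) • y = 0
        rw [mul_smul]
        exact ht
      -- p kills Q
      have hkillQ : ∀ b ∈ p, ∀ q : Q, b • q = 0 := by
        intro b hb q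
        obtain ⟨y, rfl⟩ := N'.mkQ_surjective q
        rw [← map_smul]
        have : b • y = 0 := Subtype.ext (hkillN b hb y.1 y.2)
        rw [this, map_zero]
      -- p is an associated prime of M
      obtain ⟨q0, hq0⟩ := hQne
      obtain ⟨y0, hy0⟩ := N'.mkQ_surjective q0
      have hp_assoc : p ∈ associatedPrimes A M := by
        refine AssociatedPrimes.mem_iff.mpr (iap_mk hpprime (y0 : M) ?_)
        ext r
        rw [Submodule.mem_annihilator_span_singleton]
        constructor
        · intro hr
          exact hkillN r hr y0.1 y0.2
        · intro hr
          by_contra hrp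
          apply hq0
          rw [← hy0, Submodule.mkQ_apply, Submodule.Quotient.mk_eq_zero]
          exact (Submodule.mem_torsion'_iff (R := A) (↥S) _).mpr ⟨⟨r, hrp⟩, Subtype.ext hr⟩
      -- stage 2: a maximal `(A/p)-free' submodule of Q
      set k := (A ⧸ p) with hkdef
      set 𝒮 : Set (Submodule A Q) := {F | ∃ (r : ℕ) (ψ : (Fin r → k) →ₗ[A] Q),
        Function.Injective ψ ∧ LinearMap.range ψ = F} with h𝒮def
      have h𝒮ne : 𝒮.Nonempty :=
        ⟨_, 0, (0 : (Fin 0 → k) →ₗ[A] Q), Function.injective_of_subsingleton _, rfl⟩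
      obtain ⟨F, hF𝒮, hFmax⟩ :=
        (set_has_maximal_iff_noetherian.mpr (inferInstance : IsNoetherian A Q)) 𝒮 h𝒮ne
      obtain ⟨r, ψ, hψinj, hψrange⟩ := hF𝒮
      -- every element of Q is S-torsion modulo F
      have htor : ∀ q : Q, ∃ c ∈ S, c • q ∈ F := by
        intro q
        by_contra hv
        push_neg at hv
        set ψ0 : k →ₗ[A] Q := Submodule.liftQ p (LinearMap.toSpanSingleton A Q q)
          (fun b hb => by
            rw [LinearMap.mem_ker, LinearMap.toSpanSingleton_apply]; exact hkillQ b hb q)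
          with hψ0def
        have hψ0mk : ∀ b : A, ψ0 (Ideal.Quotient.mk p b) = b • q := fun b => rfl
        set ψ' : (Fin (r+1) → k) →ₗ[A] Q :=
          ψ0.comp (LinearMap.proj 0) + ψ.comp (LinearMap.funLeft A k Fin.succ) with hψ'def
        have hcons : ∀ (c : k) (t : Fin r → k), ψ' (Fin.cons c t) = ψ0 c + ψ t := by
          intro c t
          rw [hψ'def]
          simp only [LinearMap.add_apply, LinearMap.comp_apply, LinearMap.proj_apply,
            LinearMap.funLeft_apply, Fin.cons_zero]
          show ψ0 c + ψ (Fin.cons c t ∘ Fin.succ) = ψ0 c + ψ t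
          exact congrArg (fun u => ψ0 c + ψ u) (funext fun i => by simp [Fin.cons_succ])
        have hψ'inj : Function.Injective ψ' := by
          rw [← LinearMap.ker_eq_bot, LinearMap.ker_eq_bot']
          intro f hf
          rw [← Fin.cons_self_tail f, hcons] at hf
          obtain ⟨b, hb⟩ := Ideal.Quotient.mk_surjective (f 0)
          by_cases hbp : b ∈ p
          · have hf0 : f 0 = 0 := by rw [← hb, Ideal.Quotient.eq_zero_iff_mem]; exact hbp
            rw [hf0, map_zero, zero_add] at hf
            have htail : Fin.tail f = 0 := hψinj (by rw [hf, map_zero])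
            rw [← Fin.cons_self_tail f, hf0, htail]
            funext i
            refine Fin.cases ?_ (fun j => ?_) i
            · rw [Fin.cons_zero]; rfl
            · rw [Fin.cons_succ]; rfl
          · exfalso
            apply hv b hbp
            have hbq : b • q = ψ0 (f 0) := by rw [← hb, hψ0mk]
            rw [hbq, eq_neg_of_add_eq_zero_left hf]
            exact F.neg_mem (hψrange ▸ LinearMap.mem_range_self ψ (Fin.tail f))
        have hlt : F < LinearMap.range ψ' := by
          rw [lt_iff_le_and_ne]
          constructor
          · rw [← hψrange]
            rintro z ⟨t, rfl⟩
            exact ⟨Fin.cons 0 t, by rw [hcons, map_zero, zero_add]⟩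
          · intro heq
            apply hv 1 S.one_mem
            rw [one_smul]
            have hqmem : q ∈ LinearMap.range ψ' := ⟨Fin.cons 1 0, by
              rw [hcons, map_zero, add_zero]
              have : (1 : k) = Ideal.Quotient.mk p 1 := rfl
              rw [this, hψ0mk, one_smul]⟩
            rw [heq]
            exact hqmem
        exact hFmax _ ⟨r + 1, ψ', hψ'inj, rfl⟩ hlt
      -- final dichotomy
      rcases isAssociatedPrime_exact (baseChange_injective hψinj)
          (baseChange_exact (B := B) (LinearMap.exact_map_mkQ_range ψ)) hZ with hgood | hbad
      · have h1 : IsAssociatedPrime P (Fin r → B ⊗[A] k) :=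
          ((TensorProduct.piRight A B B (fun _ : Fin r => k)).isAssociatedPrime_iff).mp hgood
        have h2 : IsAssociatedPrime P (B ⊗[A] k) := isAssociatedPrime_pi h1
        have h3 : P ∈ associatedPrimes B (B ⧸ p.map (algebraMap A B)) := by
          rw [← LinearEquiv.AssociatedPrimes.eq
            (tensorQuotEquiv (A := A) (B := B) p).toLinearEquiv]
          exact h2
        exact Set.mem_biUnion hp_assoc h3
      · exfalso
        obtain ⟨c, hcS, hc⟩ := exists_uniform_kill (A := A) S
          (fun (w : Q ⧸ LinearMap.range ψ) => by
            obtain ⟨q, rfl⟩ := (LinearMap.range ψ).mkQ_surjective w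
            obtain ⟨c, hcS, hcF⟩ := htor q
            exact ⟨c, hcS, by
              rw [← map_smul, Submodule.mkQ_apply, Submodule.Quotient.mk_eq_zero, hψrange]
              exact hcF⟩)
        exact not_isAssociatedPrime_of_kill hc (hcnotp c hcS) hbad
  · intro P hP
    rw [Set.mem_iUnion₂] at hP
    obtain ⟨p, hp, hP⟩ := hP
    exact associatedPrimes_quotient_subset hp hP
end
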